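/- Let p be a prime, n ≥ 1 an integer, and ψ : F_p → ℂˣ a nontrivial additive character. Let χ₁, χ₂ : F_{p^n}ˣ → ℂˣ be multiplicative characters with G(χ₁, ψ) = G(χ₂, ψ). Then χ₁ and χ₂ have the same restriction to the prime subfield: χ₁(ι(a)) = χ₂(ι(a)) for every a ∈ F_pˣ, where ι : F_p → F_{p^n} is the canonical embedding. -/

import Mathlib

open scoped Classical

/-- The Gauss sum over `E` of the multiplicative character `χ` with respect to the
additive character `ψ` of the base field `F` (composed with the trace map):
`G(χ, ψ) = ∑_{x ∈ Eˣ} χ(x) ψ(Tr(x))`. -/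
noncomputable def gaussSumE (F : Type) {E : Type} [Field F] [Field E] [Fintype F]
    [Fintype E] [Algebra F E] (χ : Eˣ →* ℂˣ) (ψ : AddChar F ℂ) : ℂ :=
  ∑ x : Eˣ, (χ x : ℂ) * ψ (Algebra.trace F E (x : E))

/-- If `z ^ m = 1` and `v ≡ w [MOD m]` then `z ^ v = z ^ w`. -/
lemma aux_pow_eq_pow_of_modEq {M : Type*} [Monoid M] {z : M} {m v w : ℕ} (hz : z ^ m = 1)
    (h : v % m = w % m) : z ^ v = z ^ w := by
  conv_lhs => rw [← Nat.div_add_mod v m]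
  conv_rhs => rw [← Nat.div_add_mod w m]
  rw [pow_add, pow_add, pow_mul, pow_mul, hz, one_pow, one_pow, h]

lemma aux_coprime_of_modEq {w x n : ℕ} (h : w ≡ x [MOD n]) (hx : x.Coprime n) :
    w.Coprime n := by
  have hg : Nat.gcd n w = Nat.gcd n x := by
    rw [Nat.gcd_rec n w, Nat.gcd_rec n x, h]
  unfold Nat.Coprime at *
  rw [Nat.gcd_comm, hg, Nat.gcd_comm]
  exact hx

lemma aux_mem_adjoin_of_pow_eq_one {N : ℕ} [NeZero N] {ζ z : ℂ}
    (hζ : IsPrimitiveRoot ζ N) (hz : z ^ N = 1) :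
    z ∈ Algebra.adjoin ℚ ({ζ} : Set ℂ) := by
  obtain ⟨i, _, hi⟩ := hζ.eq_pow_of_pow_eq_one hz
  rw [← hi]
  exact pow_mem (Algebra.subset_adjoin (Set.mem_singleton ζ)) i

/-- There is an automorphism of `ℚ(ζ)` raising every `N`-th root of unity to the `w`-th power,
provided `w` is coprime to `N`. -/
lemma aux_exists_aut (N : ℕ+) (ζ : ℂ) (hζ : IsPrimitiveRoot ζ (N : ℕ)) (w : ℕ)
    (hw : w.Coprime (N : ℕ)) :
    ∃ σ : (Algebra.adjoin ℚ ({ζ} : Set ℂ)) ≃ₐ[ℚ] (Algebra.adjoin ℚ ({ζ} : Set ℂ)),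
      ∀ z : (Algebra.adjoin ℚ ({ζ} : Set ℂ)), (z : ℂ) ^ (N : ℕ) = 1 →
        ((σ z : ℂ)) = (z : ℂ) ^ w := by
  haveI : NeZero (N : ℕ) := ⟨N.pos.ne'⟩
  haveI := hζ.adjoin_isCyclotomicExtension ℚ (n := N)
  set K : Subalgebra ℚ ℂ := Algebra.adjoin ℚ ({ζ} : Set ℂ) with hK
  have irr : Irreducible (Polynomial.cyclotomic (N : ℕ) ℚ) :=
    Polynomial.cyclotomic.irreducible_rat N.pos
  let u : (ZMod (N : ℕ))ˣ := ZMod.unitOfCoprime w hw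
  let σ := (IsCyclotomicExtension.autEquivPow K irr).symm u
  have hζ₀ := IsCyclotomicExtension.zeta_spec N ℚ K
  set ζ₀ := IsCyclotomicExtension.zeta N ℚ K with hζ₀def
  set v : ℕ := ((u : ZMod (N : ℕ))).val with hv
  have hspec : σ ζ₀ = ζ₀ ^ v := by
    have h1 := (IsCyclotomicExtension.zeta_spec N ℚ K).autToPow_spec ℚ σ
    have h2 : ((IsCyclotomicExtension.zeta_spec N ℚ K).autToPow ℚ) σ = u := by
      have h3 := (IsCyclotomicExtension.autEquivPow K irr).apply_symm_apply u
      simpa [σ, IsCyclotomicExtension.autEquivPow_apply] using h3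
    rw [← h1, h2]
  refine ⟨σ, fun z hz => ?_⟩
  have hz' : z ^ (N : ℕ) = 1 := by
    refine Subtype.ext ?_
    rw [SubmonoidClass.coe_pow, OneMemClass.coe_one]
    exact hz
  obtain ⟨i, _, hi⟩ := hζ₀.eq_pow_of_pow_eq_one hz'
  have hσz : σ z = z ^ v := by
    rw [← hi, map_pow, hspec, ← pow_mul, mul_comm v i, pow_mul]
  have hvw : (z : ℂ) ^ v = (z : ℂ) ^ w := by
    apply aux_pow_eq_pow_of_modEq hz
    have : v = w % (N : ℕ) := by
      rw [hv, show ((u : ZMod (N:ℕ))) = ((w : ZMod (N:ℕ))) from ZMod.coe_unitOfCoprime w hw,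
        ZMod.val_natCast]
    rw [this, Nat.mod_mod_of_dvd _ dvd_rfl]
  rw [← hvw, hσz, SubmonoidClass.coe_pow]

theorem restriction_to_prime_subfield_eq_of_gauss_sum_eq
    (p n : ℕ) [hp : Fact p.Prime] (hn : 1 ≤ n)
    (E : Type) [Field E] [Fintype E] [Algebra (ZMod p) E]
    (hE : Fintype.card E = p ^ n)
    (ψ : AddChar (ZMod p) ℂ) (hψ : ψ ≠ 1)
    (χ₁ χ₂ : Eˣ →* ℂˣ)
    (h : gaussSumE (ZMod p) χ₁ ψ = gaussSumE (ZMod p) χ₂ ψ) :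
    ∀ a : (ZMod p)ˣ,
      χ₁ (Units.map (algebraMap (ZMod p) E : ZMod p →* E) a)
        = χ₂ (Units.map (algebraMap (ZMod p) E : ZMod p →* E) a) := by
  intro a
  classical
  have hp1 := hp.out.one_lt
  have hcard2 : 2 ≤ Fintype.card E := by
    rw [hE]
    calc 2 ≤ p := hp1
    _ = p ^ 1 := (pow_one p).symm
    _ ≤ p ^ n := Nat.pow_le_pow_right hp.out.pos hn
  -- basic numerology
  set m : ℕ := Fintype.card Eˣ with hmdef
  have hm : m = Fintype.card E - 1 := Fintype.card_units (α := E)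
  have hmpos : 0 < m := by omega
  have hpm : Nat.Coprime p m := by
    rw [Nat.Prime.coprime_iff_not_dvd hp.out]
    intro hdvd
    have h1 : p ∣ Fintype.card E := by
      rw [hE]; exact dvd_pow_self p (by omega)
    have h2 : p ∣ 1 := by
      have h3 := Nat.dvd_sub h1 hdvd
      rwa [hm, Nat.sub_sub_self (by omega)] at h3
    exact Nat.Prime.one_lt hp.out |>.ne' (Nat.dvd_one.mp h2)
  set Nn : ℕ := p * m with hNn
  have hN0 : 0 < Nn := Nat.mul_pos hp.out.pos hmpos
  haveI : NeZero Nn := ⟨hN0.ne'⟩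
  obtain ⟨ζ, hζ⟩ : ∃ ζ : ℂ, IsPrimitiveRoot ζ Nn :=
    ⟨_, Complex.isPrimitiveRoot_exp Nn hN0.ne'⟩
  -- the exponent w
  obtain ⟨w, hw1, hw2⟩ := Nat.chineseRemainder hpm ((a : ZMod p)).val 1
  have hwp : w.Coprime p := aux_coprime_of_modEq hw1 (ZMod.val_coe_unit_coprime a)
  have hwm : w.Coprime m := aux_coprime_of_modEq hw2 (Nat.coprime_one_left m)
  have hwN : w.Coprime Nn := Nat.Coprime.mul_right hwp hwm
  -- each summand is an Nn-th root of unity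
  have hχroot : ∀ (χ : Eˣ →* ℂˣ) (x : Eˣ), (χ x : ℂ) ^ m = 1 := by
    intro χ x
    rw [← Units.val_pow_eq_pow_val, ← map_pow, pow_card_eq_one, map_one, Units.val_one]
  have hψroot : ∀ t : ZMod p, (ψ t) ^ p = 1 := by
    intro t
    rw [← AddChar.map_nsmul_eq_pow]
    have : p • t = 0 := by
      rw [nsmul_eq_mul, ZMod.natCast_self, zero_mul]
    rw [this, AddChar.map_zero_eq_one]
  have hterm : ∀ (χ : Eˣ →* ℂˣ) (x : Eˣ),
      ((χ x : ℂ) * ψ (Algebra.trace (ZMod p) E (x : E))) ^ Nn = 1 := by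
    intro χ x
    rw [mul_pow, hNn, mul_comm p m]
    rw [pow_mul, hχroot, one_pow, one_mul, mul_comm m p, pow_mul, hψroot, one_pow]
  -- lift the Gauss sum equality into the cyclotomic field and apply the automorphism
  set K : Subalgebra ℚ ℂ := Algebra.adjoin ℚ ({ζ} : Set ℂ) with hK
  obtain ⟨σ, hσ⟩ := aux_exists_aut ⟨Nn, hN0⟩ ζ hζ w hwN
  have htermw : ∀ (χ : Eˣ →* ℂˣ) (x : Eˣ),
      (((χ x : ℂ) * ψ (Algebra.trace (ZMod p) E (x : E))) ^ w) ^ Nn = 1 := by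
    intro χ x
    rw [← pow_mul, mul_comm w Nn, pow_mul, hterm, one_pow]
  have hgal : ∀ χ : Eˣ →* ℂˣ,
      (σ (∑ x : Eˣ, (⟨(χ x : ℂ) * ψ (Algebra.trace (ZMod p) E (x : E)),
          aux_mem_adjoin_of_pow_eq_one hζ (hterm χ x)⟩ : K)) : ℂ)
        = ∑ x : Eˣ, ((χ x : ℂ) * ψ (Algebra.trace (ZMod p) E (x : E))) ^ w := by
    intro χ
    rw [map_sum, AddSubmonoidClass.coe_finset_sum]
    refine Finset.sum_congr rfl fun x _ => ?_
    exact hσ _ (hterm χ x)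
  have hKeq : (∑ x : Eˣ, (⟨(χ₁ x : ℂ) * ψ (Algebra.trace (ZMod p) E (x : E)),
          aux_mem_adjoin_of_pow_eq_one hζ (hterm χ₁ x)⟩ : K))
      = (∑ x : Eˣ, (⟨(χ₂ x : ℂ) * ψ (Algebra.trace (ZMod p) E (x : E)),
          aux_mem_adjoin_of_pow_eq_one hζ (hterm χ₂ x)⟩ : K)) := by
    apply Subtype.coe_injective
    simp only [AddSubmonoidClass.coe_finset_sum]
    exact h
  have hgal2 : ∑ x : Eˣ, ((χ₁ x : ℂ) * ψ (Algebra.trace (ZMod p) E (x : E))) ^ w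
      = ∑ x : Eˣ, ((χ₂ x : ℂ) * ψ (Algebra.trace (ZMod p) E (x : E))) ^ w := by
    rw [← hgal χ₁, ← hgal χ₂, hKeq]
  -- rewrite the twisted terms
  have htermeq : ∀ (χ : Eˣ →* ℂˣ) (x : Eˣ),
      ((χ x : ℂ) * ψ (Algebra.trace (ZMod p) E (x : E))) ^ w
        = (χ x : ℂ) * ψ ((a : ZMod p) * Algebra.trace (ZMod p) E (x : E)) := by
    intro χ x
    rw [mul_pow]
    congr 1
    · have := aux_pow_eq_pow_of_modEq (hχroot χ x) hw2
      rw [this, pow_one]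
    · rw [← AddChar.map_nsmul_eq_pow, nsmul_eq_mul]
      congr 1
      have h1 : ((w : ZMod p)) = (((a : ZMod p)).val : ZMod p) :=
        (ZMod.natCast_eq_natCast_iff _ _ _).mpr hw1
      rw [h1, ZMod.natCast_val, ZMod.cast_id]
  have hgal3 : ∑ x : Eˣ, (χ₁ x : ℂ) * ψ ((a : ZMod p) * Algebra.trace (ZMod p) E (x : E))
      = ∑ x : Eˣ, (χ₂ x : ℂ) * ψ ((a : ZMod p) * Algebra.trace (ZMod p) E (x : E)) := by
    rw [← Finset.sum_congr rfl fun x _ => htermeq χ₁ x,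
      ← Finset.sum_congr rfl fun x _ => htermeq χ₂ x]
    exact hgal2
  -- the multiplicative twist
  set A : Eˣ := Units.map (algebraMap (ZMod p) E : ZMod p →* E) a with hA
  have htwist : ∀ χ : Eˣ →* ℂˣ, gaussSumE (ZMod p) χ ψ
      = (χ A : ℂ) * ∑ x : Eˣ, (χ x : ℂ) * ψ ((a : ZMod p) * Algebra.trace (ZMod p) E (x : E)) := by
    intro χ
    rw [Finset.mul_sum, gaussSumE]
    refine (Fintype.sum_equiv (Equiv.mulLeft A) _ _ fun x => ?_).symm
    have h1 : ((A * x : Eˣ) : E) = ((a : ZMod p)) • (x : E) := by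
      rw [Units.val_mul, Algebra.smul_def]
      rfl
    have h2 : Algebra.trace (ZMod p) E ((A * x : Eˣ) : E)
        = (a : ZMod p) * Algebra.trace (ZMod p) E (x : E) := by
      rw [h1, map_smul, smul_eq_mul]
    simp only [Equiv.coe_mulLeft]
    rw [h2, map_mul χ A x, Units.val_mul]
    ring
  -- nonvanishing of the Gauss sum
  have hGnz : gaussSumE (ZMod p) χ₁ ψ ≠ 0 := by
    set ψ' : AddChar E ℂ := ψ.compAddMonoidHom (Algebra.trace (ZMod p) E).toAddMonoidHom with hψ'def
    haveI : FiniteDimensional (ZMod p) E := Module.finite_iff_finite.mpr inferInstance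
    have hψ' : ψ' ≠ 1 := by
      obtain ⟨t, ht⟩ := AddChar.ne_one_iff.mp hψ
      obtain ⟨x, hx⟩ := Algebra.trace_surjective (ZMod p) E t
      refine AddChar.ne_one_iff.mpr ⟨x, ?_⟩
      show ψ (Algebra.trace (ZMod p) E x) ≠ 1
      rw [hx]; exact ht
    have hsplit : ∀ χ' : MulChar E ℂ, gaussSum χ' ψ' = ∑ x : Eˣ, χ' (x : E) * ψ' (x : E) := by
      intro χ'
      rw [gaussSum]
      rw [← Finset.add_sum_erase _ _ (Finset.mem_univ (0 : E))]
      rw [MulChar.map_nonunit χ' not_isUnit_zero, zero_mul, zero_add]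
      refine Finset.sum_bij' (fun (x : E) (hx : x ∈ Finset.univ.erase 0) =>
        Units.mk0 x (Finset.ne_of_mem_erase hx)) (fun (u : Eˣ) _ => (u : E)) ?_ ?_ ?_ ?_ ?_
      · intro x hx; exact Finset.mem_univ _
      · intro u _
        exact Finset.mem_erase.mpr ⟨u.ne_zero, Finset.mem_univ _⟩
      · intro x hx; simp
      · intro u _; simp
      · intro x hx; simp
    have hEq : gaussSumE (ZMod p) χ₁ ψ = gaussSum (MulChar.ofUnitHom χ₁) ψ' := by
      rw [hsplit, gaussSumE]
      refine Finset.sum_congr rfl fun x _ => ?_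
      rw [MulChar.ofUnitHom_coe]
      rfl
    rw [hEq]
    by_cases hχ : MulChar.ofUnitHom χ₁ = 1
    · rw [hχ]
      have hs : gaussSum (1 : MulChar E ℂ) ψ' = ∑ x : Eˣ, ψ' (x : E) := by
        rw [hsplit]
        refine Finset.sum_congr rfl fun x _ => ?_
        rw [MulChar.one_apply_coe, one_mul]
      have hz : (0 : ℂ) = ψ' 0 + ∑ x ∈ Finset.univ.erase (0 : E), ψ' x := by
        rw [Finset.add_sum_erase _ _ (Finset.mem_univ (0 : E))]
        exact (AddChar.sum_eq_zero_of_ne_one hψ').symm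
      have hz2 : ∑ x ∈ Finset.univ.erase (0 : E), ψ' x = ∑ x : Eˣ, ψ' (x : E) := by
        refine Finset.sum_bij' (fun (x : E) (hx : x ∈ Finset.univ.erase 0) =>
          Units.mk0 x (Finset.ne_of_mem_erase hx)) (fun (u : Eˣ) _ => (u : E)) ?_ ?_ ?_ ?_ ?_
        · intro x hx; exact Finset.mem_univ _
        · intro u _
          exact Finset.mem_erase.mpr ⟨u.ne_zero, Finset.mem_univ _⟩
        · intro x hx; simp
        · intro u _; simp
        · intro x hx; simp
      rw [hs, ← hz2]
      have heq : ∑ x ∈ Finset.univ.erase (0 : E), ψ' x = -1 := by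
        have h0 : ψ' (0 : E) = 1 := AddChar.map_zero_eq_one ψ'
        rw [h0] at hz
        linear_combination -hz
      rw [heq]
      norm_num
    · intro h0
      have hcard := gaussSum_mul_gaussSum_eq_card hχ (AddChar.IsPrimitive.of_ne_one hψ')
      rw [h0, zero_mul] at hcard
      have : (Fintype.card E : ℂ) ≠ 0 := Nat.cast_ne_zero.mpr Fintype.card_ne_zero
      exact this hcard.symm
  -- conclude
  have hS : ∑ x : Eˣ, (χ₁ x : ℂ) * ψ ((a : ZMod p) * Algebra.trace (ZMod p) E (x : E)) ≠ 0 := by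
    intro h0
    apply hGnz
    rw [htwist χ₁, h0, mul_zero]
  have hfin : (χ₁ A : ℂ) = (χ₂ A : ℂ) := by
    have e1 := htwist χ₁
    have e2 := htwist χ₂
    rw [h, e2, ← hgal3] at e1
    exact mul_right_cancel₀ hS e1.symm
  exact Units.ext hfin
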